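/- Set λ = √6 and let γ be any real number. Define the shifted map components X̄(X,Y) = W₁(1 + X, Y) − 1 and Ȳ(X,Y) = W₂(1 + X, Y), which fix the origin (corresponding to the fixed point B = (1,0)). Define ψ(Y) = −Y²/2. Then: (i) the center-manifold invariance residual R(Y) = ψ(Ȳ(ψ(Y), Y)) − X̄(ψ(Y), Y) satisfies R(Y) = O(Y⁴) as Y → 0; (ii) the reduced map satisfies Ȳ(ψ(Y), Y) = Y − (3/2)·Y³ + O(Y⁵) as Y → 0. -/
import Mathlib


open Asymptotics Filter

noncomputable def f (γ lam x y : ℝ) : ℝ :=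
  (3/2) * x * (2*x^2 + γ*(1 - x^2 - y^2)) - 3*x + Real.sqrt (3/2) * lam * y^2

noncomputable def g (γ lam x y : ℝ) : ℝ :=
  (3/2) * y * (2*x^2 + γ*(1 - x^2 - y^2)) - Real.sqrt (3/2) * lam * x * y

/-- The unit-step Euler discretization map W(x,y) = (x + f(x,y), y + g(x,y)). -/
noncomputable def W (γ lam : ℝ) (p : ℝ × ℝ) : ℝ × ℝ :=
  (p.1 + f γ lam p.1 p.2, p.2 + g γ lam p.1 p.2)

/-- The map W with λ = √6, shifted so that the fixed point B = (1,0) is at the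
origin: first component. -/
noncomputable def Xbar (γ X Y : ℝ) : ℝ := (W γ (Real.sqrt 6) (1 + X, Y)).1 - 1

/-- The shifted map: second component. -/
noncomputable def Ybar (γ X Y : ℝ) : ℝ := (W γ (Real.sqrt 6) (1 + X, Y)).2

/-- The approximate center manifold X = ψ(Y) = −Y²/2 at B for λ = √6. -/
noncomputable def ψ (Y : ℝ) : ℝ := -Y^2/2

/-- For λ = √6: (i) the center-manifold invariance residual is O(Y⁴);
(ii) the reduced map is Y − (3/2)Y³ + O(Y⁵). -/
theorem stmt_14 (γ : ℝ) :
    (fun Y : ℝ => ψ (Ybar γ (ψ Y) Y) - Xbar γ (ψ Y) Y) =O[nhds (0:ℝ)]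
      (fun Y : ℝ => Y^4) ∧
    (fun Y : ℝ => Ybar γ (ψ Y) Y - (Y - (3/2)*Y^3)) =O[nhds (0:ℝ)]
      (fun Y : ℝ => Y^5) := by
  have hs : Real.sqrt (3/2) * Real.sqrt 6 = 3 := by
    rw [← Real.sqrt_mul (by norm_num)]
    rw [show (3/2 : ℝ) * 6 = 9 by norm_num]
    rw [show (9:ℝ) = 3^2 by norm_num, Real.sqrt_sq (by norm_num)]
  constructor
  · have h1 : ∀ Y : ℝ, ψ (Ybar γ (ψ Y) Y) - Xbar γ (ψ Y) Y =
        Y^4 * (3*γ/8 - 3/4 + (3*γ/16 - 3/2)*Y^2 + (9/8 - 9*γ/16)*Y^4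
          + (9*γ/32 - 9/32 - 9*γ^2/128)*Y^6) := by
      intro Y
      simp only [ψ, Ybar, Xbar, W, f, g, hs]
      ring
    have hc : Filter.Tendsto
        (fun Y : ℝ => 3*γ/8 - 3/4 + (3*γ/16 - 3/2)*Y^2 + (9/8 - 9*γ/16)*Y^4
          + (9*γ/32 - 9/32 - 9*γ^2/128)*Y^6) (nhds 0)
        (nhds ((3*γ/8 - 3/4 + (3*γ/16 - 3/2)*(0:ℝ)^2 + (9/8 - 9*γ/16)*(0:ℝ)^4
          + (9*γ/32 - 9/32 - 9*γ^2/128)*(0:ℝ)^6))) := by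
      apply Continuous.tendsto
      continuity
    have hb := hc.isBigO_one ℝ
    calc (fun Y : ℝ => ψ (Ybar γ (ψ Y) Y) - Xbar γ (ψ Y) Y)
        =O[nhds (0:ℝ)] (fun Y : ℝ => Y^4 * 1) := by
          simp only [h1]
          exact (isBigO_refl (fun Y : ℝ => Y^4) _).mul hb
      _ =O[nhds (0:ℝ)] (fun Y : ℝ => Y^4) := by simp [isBigO_refl]
  · have h1 : ∀ Y : ℝ, Ybar γ (ψ Y) Y - (Y - (3/2)*Y^3) =
        Y^5 * (3/4 - 3*γ/8) := by
      intro Y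
      simp only [ψ, Ybar, W, f, g, hs]
      ring
    calc (fun Y : ℝ => Ybar γ (ψ Y) Y - (Y - (3/2)*Y^3))
        =O[nhds (0:ℝ)] (fun Y : ℝ => Y^5 * (3/4 - 3*γ/8)) := by
          simp only [h1]; exact isBigO_refl _ _
      _ =O[nhds (0:ℝ)] (fun Y : ℝ => Y^5) :=
          (isBigO_refl (fun Y : ℝ => Y^5) _).mul (isBigO_const_const _ one_ne_zero _)
          |>.trans (by simp [isBigO_refl])
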